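/- Let α > β - 1 > 0. Then ∫_0^π |sin t|^α / t^β dt ≤ (1/2)(6/α)^{(α-β+1)/2} Γ((α-β+1)/2). -/

import Mathlib

open Real MeasureTheory Set

private lemma nonneg_of_deriv {f f' : ℝ → ℝ} (hd : ∀ x, HasDerivAt f (f' x) x)
    (h0 : 0 ≤ f 0) (hf' : ∀ x, 0 < x → 0 ≤ f' x) {x : ℝ} (hx : 0 ≤ x) : 0 ≤ f x := by
  have hmono : MonotoneOn f (Ici 0) := by
    apply monotoneOn_of_deriv_nonneg (convex_Ici 0)
    · exact fun y _ => (hd y).continuousAt.continuousWithinAt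
    · intro y hy
      exact (hd y).differentiableAt.differentiableWithinAt
    · intro y hy
      rw [interior_Ici] at hy
      rw [(hd y).deriv]
      exact hf' y hy
  calc (0:ℝ) ≤ f 0 := h0
    _ ≤ f x := hmono self_mem_Ici hx hx

private lemma sin_ge_cubic {x : ℝ} (hx : 0 ≤ x) : x - x ^ 3 / 6 ≤ Real.sin x := by
  have := nonneg_of_deriv (f := fun y => Real.sin y - (y - y ^ 3 / 6))
      (f' := fun y => Real.cos y - (1 - y ^ 2 / 2)) ?_ (by simp) ?_ hx
  · linarith [this]
  · intro y
    have h2 : HasDerivAt (fun y : ℝ => y - y ^ 3 / 6) (1 - y ^ 2 / 2) y := by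
      have := (hasDerivAt_id y).sub ((hasDerivAt_pow 3 y).div_const 6)
      refine this.congr_deriv ?_
      push_cast
      ring
    exact (Real.hasDerivAt_sin y).sub h2
  · intro y _
    have := Real.one_sub_sq_div_two_le_cos (x := y)
    simp only [sub_nonneg]
    linarith

private lemma cos_le_quartic {x : ℝ} (hx : 0 ≤ x) :
    Real.cos x ≤ 1 - x ^ 2 / 2 + x ^ 4 / 24 := by
  have := nonneg_of_deriv (f := fun y => (1 - y ^ 2 / 2 + y ^ 4 / 24) - Real.cos y)
      (f' := fun y => (-y + y ^ 3 / 6) + Real.sin y) ?_ (by simp) ?_ hx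
  · linarith [this]
  · intro y
    have h2 : HasDerivAt (fun y : ℝ => 1 - y ^ 2 / 2 + y ^ 4 / 24) (-y + y ^ 3 / 6) y := by
      have := ((hasDerivAt_const y (1:ℝ)).sub ((hasDerivAt_pow 2 y).div_const 2)).add
        ((hasDerivAt_pow 4 y).div_const 24)
      refine this.congr_deriv ?_
      push_cast
      ring
    have := h2.sub (Real.hasDerivAt_cos y)
    exact this.congr_deriv (by ring)
  · intro y hy
    have := sin_ge_cubic hy.le
    linarith

private lemma sin_le_quintic {x : ℝ} (hx : 0 ≤ x) :
    Real.sin x ≤ x - x ^ 3 / 6 + x ^ 5 / 120 := by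
  have := nonneg_of_deriv (f := fun y => (y - y ^ 3 / 6 + y ^ 5 / 120) - Real.sin y)
      (f' := fun y => (1 - y ^ 2 / 2 + y ^ 4 / 24) - Real.cos y) ?_ (by simp) ?_ hx
  · linarith [this]
  · intro y
    have h2 : HasDerivAt (fun y : ℝ => y - y ^ 3 / 6 + y ^ 5 / 120)
        (1 - y ^ 2 / 2 + y ^ 4 / 24) y := by
      have := ((hasDerivAt_id y).sub ((hasDerivAt_pow 3 y).div_const 6)).add
        ((hasDerivAt_pow 5 y).div_const 120)
      refine this.congr_deriv ?_
      push_cast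
      ring
    exact h2.sub (Real.hasDerivAt_sin y)
  · intro y hy
    have := cos_le_quartic hy.le
    linarith

private lemma hasDerivAt_exp_neg (x : ℝ) :
    HasDerivAt (fun y : ℝ => Real.exp (-y)) (-Real.exp (-x)) x := by
  have := (Real.hasDerivAt_exp (-x)).comp x ((hasDerivAt_id x).neg)
  exact this.congr_deriv (by ring)

private lemma exp_neg_le_quadratic {x : ℝ} (hx : 0 ≤ x) :
    Real.exp (-x) ≤ 1 - x + x ^ 2 / 2 := by
  have := nonneg_of_deriv (f := fun y => (1 - y + y ^ 2 / 2) - Real.exp (-y))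
      (f' := fun y => (-1 + y) + Real.exp (-y)) ?_ (by simp) ?_ hx
  · linarith [this]
  · intro y
    have h2 : HasDerivAt (fun y : ℝ => 1 - y + y ^ 2 / 2) (-1 + y) y := by
      have := ((hasDerivAt_const y (1:ℝ)).sub (hasDerivAt_id y)).add
        ((hasDerivAt_pow 2 y).div_const 2)
      refine this.congr_deriv ?_
      push_cast
      ring
    have := h2.sub (hasDerivAt_exp_neg y)
    exact this.congr_deriv (by ring)
  · intro y hy
    have := Real.add_one_le_exp (-y)
    linarith

private lemma cubic_le_exp_neg {x : ℝ} (hx : 0 ≤ x) :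
    1 - x + x ^ 2 / 2 - x ^ 3 / 6 ≤ Real.exp (-x) := by
  have := nonneg_of_deriv (f := fun y => Real.exp (-y) - (1 - y + y ^ 2 / 2 - y ^ 3 / 6))
      (f' := fun y => -Real.exp (-y) - (-1 + y - y ^ 2 / 2)) ?_ (by simp) ?_ hx
  · linarith [this]
  · intro y
    have h2 : HasDerivAt (fun y : ℝ => 1 - y + y ^ 2 / 2 - y ^ 3 / 6) (-1 + y - y ^ 2 / 2) y := by
      have := (((hasDerivAt_const y (1:ℝ)).sub (hasDerivAt_id y)).add
        ((hasDerivAt_pow 2 y).div_const 2)).sub ((hasDerivAt_pow 3 y).div_const 6)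
      refine this.congr_deriv ?_
      push_cast
      ring
    exact (hasDerivAt_exp_neg y).sub h2
  · intro y hy
    have := exp_neg_le_quadratic hy.le
    linarith

private lemma exp_neg_le_quartic {x : ℝ} (hx : 0 ≤ x) :
    Real.exp (-x) ≤ 1 - x + x ^ 2 / 2 - x ^ 3 / 6 + x ^ 4 / 24 := by
  have := nonneg_of_deriv
      (f := fun y => (1 - y + y ^ 2 / 2 - y ^ 3 / 6 + y ^ 4 / 24) - Real.exp (-y))
      (f' := fun y => (-1 + y - y ^ 2 / 2 + y ^ 3 / 6) + Real.exp (-y)) ?_ (by simp) ?_ hx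
  · linarith [this]
  · intro y
    have h2 : HasDerivAt (fun y : ℝ => 1 - y + y ^ 2 / 2 - y ^ 3 / 6 + y ^ 4 / 24)
        (-1 + y - y ^ 2 / 2 + y ^ 3 / 6) y := by
      have := ((((hasDerivAt_const y (1:ℝ)).sub (hasDerivAt_id y)).add
        ((hasDerivAt_pow 2 y).div_const 2)).sub ((hasDerivAt_pow 3 y).div_const 6)).add
        ((hasDerivAt_pow 4 y).div_const 24)
      refine this.congr_deriv ?_
      push_cast
      ring
    have := h2.sub (hasDerivAt_exp_neg y)
    exact this.congr_deriv (by ring)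
  · intro y hy
    have := cubic_le_exp_neg hy.le
    linarith

private lemma quintic_le_exp_neg {x : ℝ} (hx : 0 ≤ x) :
    1 - x + x ^ 2 / 2 - x ^ 3 / 6 + x ^ 4 / 24 - x ^ 5 / 120 ≤ Real.exp (-x) := by
  have := nonneg_of_deriv
      (f := fun y => Real.exp (-y) - (1 - y + y ^ 2 / 2 - y ^ 3 / 6 + y ^ 4 / 24 - y ^ 5 / 120))
      (f' := fun y => -Real.exp (-y) - (-1 + y - y ^ 2 / 2 + y ^ 3 / 6 - y ^ 4 / 24))
      ?_ (by simp) ?_ hx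
  · linarith [this]
  · intro y
    have h2 : HasDerivAt
        (fun y : ℝ => 1 - y + y ^ 2 / 2 - y ^ 3 / 6 + y ^ 4 / 24 - y ^ 5 / 120)
        (-1 + y - y ^ 2 / 2 + y ^ 3 / 6 - y ^ 4 / 24) y := by
      have := (((((hasDerivAt_const y (1:ℝ)).sub (hasDerivAt_id y)).add
        ((hasDerivAt_pow 2 y).div_const 2)).sub ((hasDerivAt_pow 3 y).div_const 6)).add
        ((hasDerivAt_pow 4 y).div_const 24)).sub ((hasDerivAt_pow 5 y).div_const 120)
      refine this.congr_deriv ?_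
      push_cast
      ring
    exact (hasDerivAt_exp_neg y).sub h2
  · intro y hy
    have := exp_neg_le_quartic hy.le
    linarith

private lemma sin_le_mul_exp {t : ℝ} (ht : 0 ≤ t) (htp : t ≤ Real.pi) :
    Real.sin t ≤ t * Real.exp (-(t ^ 2 / 6)) := by
  have h5 := sin_le_quintic ht
  have hx : (0:ℝ) ≤ t ^ 2 / 6 := by positivity
  have he := quintic_le_exp_neg hx
  have hπ : t < 3.1416 := lt_of_le_of_lt htp Real.pi_lt_d4
  have hu : t ^ 2 ≤ 9.87 := by nlinarith
  have hcube : 0 ≤ 5184 - 720 * t ^ 2 + 30 * t ^ 4 - t ^ 6 := by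
    nlinarith [mul_nonneg (mul_nonneg (sub_nonneg.2 hu) (sub_nonneg.2 hu)) (sub_nonneg.2 hu),
      mul_nonneg (sub_nonneg.2 hu) (sub_nonneg.2 hu), sub_nonneg.2 hu, sq_nonneg t]
  have hpoly : t - t ^ 3 / 6 + t ^ 5 / 120 ≤
      t * (1 - t ^ 2 / 6 + (t ^ 2 / 6) ^ 2 / 2 - (t ^ 2 / 6) ^ 3 / 6 + (t ^ 2 / 6) ^ 4 / 24
        - (t ^ 2 / 6) ^ 5 / 120) := by
    nlinarith [mul_nonneg (pow_nonneg ht 5) hcube]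
  calc Real.sin t ≤ t - t ^ 3 / 6 + t ^ 5 / 120 := h5
    _ ≤ t * (1 - t ^ 2 / 6 + (t ^ 2 / 6) ^ 2 / 2 - (t ^ 2 / 6) ^ 3 / 6 + (t ^ 2 / 6) ^ 4 / 24
        - (t ^ 2 / 6) ^ 5 / 120) := hpoly
    _ ≤ t * Real.exp (-(t ^ 2 / 6)) := mul_le_mul_of_nonneg_left he ht

theorem moment_integral_upper_bound (α β : ℝ) (hβ : 1 < β) (hαβ : β - 1 < α) :
    (∫ t in Ioc (0:ℝ) Real.pi, |Real.sin t| ^ α / t ^ β)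
      ≤ (1 / 2) * (6 / α) ^ ((α - β + 1) / 2) * Real.Gamma ((α - β + 1) / 2) := by
  have hα : 0 < α := by linarith
  have hb : 0 < α / 6 := by linarith
  have hs : (-1:ℝ) < α - β := by linarith
  set g : ℝ → ℝ := fun t => t ^ (α - β) * Real.exp (-(α / 6) * t ^ 2) with hg_def
  have hpt : ∀ t ∈ Ioc (0:ℝ) Real.pi, |Real.sin t| ^ α / t ^ β ≤ g t := by
    rintro t ⟨ht0, htπ⟩
    have hsin0 : 0 ≤ Real.sin t := Real.sin_nonneg_of_nonneg_of_le_pi ht0.le htπ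
    rw [abs_of_nonneg hsin0]
    have h1 : Real.sin t ^ α ≤ (t * Real.exp (-(t ^ 2 / 6))) ^ α :=
      Real.rpow_le_rpow hsin0 (sin_le_mul_exp ht0.le htπ) hα.le
    have h2 : (t * Real.exp (-(t ^ 2 / 6))) ^ α = t ^ α * Real.exp (-(α / 6) * t ^ 2) := by
      rw [Real.mul_rpow ht0.le (Real.exp_pos _).le, ← Real.exp_mul]
      ring_nf
    have h3 : Real.sin t ^ α / t ^ β ≤ (t ^ α * Real.exp (-(α / 6) * t ^ 2)) / t ^ β := by
      rw [← h2]
      gcongr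
    refine h3.trans_eq ?_
    rw [hg_def]
    simp only
    rw [Real.rpow_sub ht0, mul_div_right_comm]
  have hg_int : IntegrableOn g (Ioi (0:ℝ)) := integrableOn_rpow_mul_exp_neg_mul_sq hb hs
  have hg_int' : IntegrableOn g (Ioc (0:ℝ) Real.pi) := hg_int.mono_set Ioc_subset_Ioi_self
  have hf_meas : AEStronglyMeasurable (fun t : ℝ => |Real.sin t| ^ α / t ^ β)
      (volume.restrict (Ioc (0:ℝ) Real.pi)) := by
    exact ((Real.measurable_sin.abs.pow measurable_const).div
      (measurable_id.pow measurable_const)).aestronglyMeasurable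
  have hf_int : IntegrableOn (fun t : ℝ => |Real.sin t| ^ α / t ^ β) (Ioc (0:ℝ) Real.pi) := by
    apply hg_int'.mono' hf_meas
    filter_upwards [ae_restrict_mem measurableSet_Ioc] with t ht
    rw [Real.norm_eq_abs, abs_of_nonneg (div_nonneg (Real.rpow_nonneg (abs_nonneg _) _)
      (Real.rpow_nonneg (le_of_lt ht.1) _))]
    exact hpt t ht
  have hval : ∫ x in Ioi (0:ℝ), g x
      = (1 / 2) * (6 / α) ^ ((α - β + 1) / 2) * Real.Gamma ((α - β + 1) / 2) := by
    have h := integral_rpow_mul_exp_neg_mul_rpow (p := 2) (q := α - β) (b := α / 6)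
      two_pos hs hb
    simp_rw [Real.rpow_two] at h
    rw [hg_def]
    simp only
    rw [h]
    rw [show -(α - β + 1) / 2 = -((α - β + 1) / 2) by ring, Real.rpow_neg hb.le,
      ← Real.inv_rpow hb.le, inv_div]
    ring
  calc (∫ t in Ioc (0:ℝ) Real.pi, |Real.sin t| ^ α / t ^ β)
      ≤ ∫ t in Ioc (0:ℝ) Real.pi, g t :=
        setIntegral_mono_on hf_int hg_int' measurableSet_Ioc hpt
    _ ≤ ∫ t in Ioi (0:ℝ), g t := by
        apply setIntegral_mono_set hg_int
        · filter_upwards [ae_restrict_mem measurableSet_Ioi] with t ht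
          exact mul_nonneg (Real.rpow_nonneg (le_of_lt ht) _) (Real.exp_pos _).le
        · exact HasSubset.Subset.eventuallyLE Ioc_subset_Ioi_self
    _ = _ := hval
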